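/- arXiv:1206.2588 — 4 statements merged into one kernel-verified Lean document; each statement's English description precedes it below -/
import Mathlib

section
/- Let M ≥ 2, N = 2M, let L be an integer with 3 ≤ L ≤ N − 2, and let α_1,…,α_N, β_1,…,β_N be real numbers. Define real numbers A_1,…,A_N by: A_1 = π − α_N − β_N − β_2; A_k = α_{k−1} + β_{k−1} − β_{k+1} for k ∈ {2,…,L−2} ∪ {L+1,…,N−1}; A_{L−1} = −π + α_{L−2} + β_{L−2} + β_L; A_L = π − α_{L−1} − β_{L−1} − β_{L+1}; A_N = −π + α_{N−1} + β_{N−1} + β_1. If Σ_{k=1}^{L−1} α_k − Σ_{k=L}^{N} α_k = 0 and Σ_{k=1}^{L−1} (−1)^{k+1} α_k − Σ_{k=L}^{N} (−1)^{k+1} α_k = 0, then also Σ_{k=1}^{L−1} A_k − Σ_{k=L}^{N} A_k = 0 and Σ_{k=1}^{L−1} (−1)^{k+1} A_k − Σ_{k=L}^{N} (−1)^{k+1} A_k = 0. -/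
open Real Finset

private lemma top_split' (F : ℕ → ℝ) (a b : ℕ) (h : a ≤ b) (hb : 1 ≤ b) :
    ∑ k ∈ Icc a b, F k = ∑ k ∈ Icc a (b-1), F k + F b := by
  obtain ⟨c, rfl⟩ : ∃ c, b = c+1 := ⟨b-1, by omega⟩
  rw [show c+1-1 = c from by omega]
  exact Finset.sum_Icc_succ_top h F

private lemma split3 (F : ℕ → ℝ) (a b : ℕ) (h : a+1 ≤ b) :
    ∑ k ∈ Icc a b, F k = F a + ∑ k ∈ Icc (a+1) (b-1), F k + F b := by
  obtain ⟨m, rfl⟩ : ∃ m, b = a+1+m := ⟨b-(a+1), by omega⟩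
  rw [show a+1+m-1 = a+m from by omega, show a+1+m = a+m+1 from by omega,
    Finset.sum_Icc_succ_top (show a ≤ a+m+1 from by omega) F]
  have hb : Icc a (a+m) = insert a (Ioc a (a+m)) := (Finset.Ioc_insert_left (by omega)).symm
  rw [hb, Finset.sum_insert (by simp), ← Finset.Icc_add_one_left_eq_Ioc]

private lemma T0 (f : ℕ → ℝ) (c : ℕ) : ∀ m,
    ∑ k ∈ Icc (c+2) (c+1+m), f (k-1) = ∑ j ∈ Icc (c+1) (c+m), f j := by
  intro m
  induction m with
  | zero =>
    rw [Finset.Icc_eq_empty (by omega), Finset.Icc_eq_empty (by omega)]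
    simp
  | succ m ih =>
    rw [show c+1+(m+1) = (c+1+m)+1 from by omega,
      Finset.sum_Icc_succ_top (show c+2 ≤ (c+1+m)+1 from by omega) (fun k => f (k-1)),
      show c+(m+1) = (c+m)+1 from by omega,
      Finset.sum_Icc_succ_top (show c+1 ≤ (c+m)+1 from by omega) f, ih,
      show c+1+m+1-1 = c+m+1 from by omega]

private lemma T1 (f : ℕ → ℝ) (c : ℕ) : ∀ m,
    ∑ k ∈ Icc (c+2) (c+1+m), (f (k-1) - f (k+1))
      = f (c+1) + f (c+2) - f (c+1+m) - f (c+2+m) := by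
  intro m
  induction m with
  | zero =>
    rw [Finset.Icc_eq_empty (by omega)]
    simp only [Finset.sum_empty, Nat.add_zero]
    ring
  | succ m ih =>
    rw [show c+1+(m+1) = (c+1+m)+1 from by omega,
      Finset.sum_Icc_succ_top (show c+2 ≤ (c+1+m)+1 from by omega)
        (fun k => f (k-1) - f (k+1)), ih,
      show c+1+m+1-1 = c+1+m from by omega,
      show c+2+(m+1) = c+1+m+1+1 from by omega,
      show c+2+m = c+1+m+1 from by omega]
    ring

private lemma T2 (f : ℕ → ℝ) (c : ℕ) : ∀ m,
    ∑ k ∈ Icc (c+2) (c+1+m), (-1:ℝ)^(k+1) * f (k-1)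
      = -∑ j ∈ Icc (c+1) (c+m), (-1:ℝ)^(j+1) * f j := by
  intro m
  induction m with
  | zero =>
    rw [Finset.Icc_eq_empty (by omega), Finset.Icc_eq_empty (by omega)]
    simp
  | succ m ih =>
    rw [show c+1+(m+1) = (c+1+m)+1 from by omega,
      Finset.sum_Icc_succ_top (show c+2 ≤ (c+1+m)+1 from by omega)
        (fun k => (-1:ℝ)^(k+1) * f (k-1)),
      show c+(m+1) = (c+m)+1 from by omega,
      Finset.sum_Icc_succ_top (show c+1 ≤ (c+m)+1 from by omega)
        (fun j => (-1:ℝ)^(j+1) * f j), ih,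
      show c+1+m+1-1 = c+m+1 from by omega]
    ring

private lemma T3 (f : ℕ → ℝ) (c : ℕ) : ∀ m,
    ∑ k ∈ Icc (c+2) (c+1+m), (-1:ℝ)^(k+1) * (f (k-1) - f (k+1))
      = (-1:ℝ)^(c+3) * f (c+1) + (-1:ℝ)^(c+2) * f (c+2)
        - (-1:ℝ)^(c+1+m) * f (c+1+m) - (-1:ℝ)^(c+2+m) * f (c+2+m) := by
  intro m
  induction m with
  | zero =>
    rw [Finset.Icc_eq_empty (by omega)]
    simp only [Finset.sum_empty, Nat.add_zero]
    ring
  | succ m ih =>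
    rw [show c+1+(m+1) = (c+1+m)+1 from by omega,
      Finset.sum_Icc_succ_top (show c+2 ≤ (c+1+m)+1 from by omega)
        (fun k => (-1:ℝ)^(k+1) * (f (k-1) - f (k+1))), ih,
      show c+1+m+1-1 = c+1+m from by omega,
      show c+2+(m+1) = c+1+m+1+1 from by omega,
      show c+2+m = c+1+m+1 from by omega]
    ring

private lemma L0 (f : ℕ → ℝ) (a b : ℕ) (ha : 2 ≤ a) (hb : a ≤ b+1) :
    ∑ k ∈ Icc a b, f (k-1) = ∑ j ∈ Icc (a-1) (b-1), f j := by
  obtain ⟨c, rfl⟩ : ∃ c, a = c+2 := ⟨a-2, by omega⟩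
  obtain ⟨m, rfl⟩ : ∃ m, b = c+1+m := ⟨b-(c+1), by omega⟩
  rw [show c+2-1 = c+1 from by omega, show c+1+m-1 = c+m from by omega]
  exact T0 f c m

private lemma L1 (f : ℕ → ℝ) (a b : ℕ) (ha : 2 ≤ a) (hb : a ≤ b+1) :
    ∑ k ∈ Icc a b, (f (k-1) - f (k+1)) = f (a-1) + f a - f b - f (b+1) := by
  obtain ⟨c, rfl⟩ : ∃ c, a = c+2 := ⟨a-2, by omega⟩
  obtain ⟨m, rfl⟩ : ∃ m, b = c+1+m := ⟨b-(c+1), by omega⟩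
  rw [show c+2-1 = c+1 from by omega, show c+1+m+1 = c+2+m from by omega]
  exact T1 f c m

private lemma L2 (f : ℕ → ℝ) (a b : ℕ) (ha : 2 ≤ a) (hb : a ≤ b+1) :
    ∑ k ∈ Icc a b, (-1:ℝ)^(k+1) * f (k-1)
      = -∑ j ∈ Icc (a-1) (b-1), (-1:ℝ)^(j+1) * f j := by
  obtain ⟨c, rfl⟩ : ∃ c, a = c+2 := ⟨a-2, by omega⟩
  obtain ⟨m, rfl⟩ : ∃ m, b = c+1+m := ⟨b-(c+1), by omega⟩
  rw [show c+2-1 = c+1 from by omega, show c+1+m-1 = c+m from by omega]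
  exact T2 f c m

private lemma L3 (f : ℕ → ℝ) (a b : ℕ) (ha : 2 ≤ a) (hb : a ≤ b+1) :
    ∑ k ∈ Icc a b, (-1:ℝ)^(k+1) * (f (k-1) - f (k+1))
      = (-1:ℝ)^(a+1) * f (a-1) + (-1:ℝ)^a * f a
        - (-1:ℝ)^b * f b - (-1:ℝ)^(b+1) * f (b+1) := by
  obtain ⟨c, rfl⟩ : ∃ c, a = c+2 := ⟨a-2, by omega⟩
  obtain ⟨m, rfl⟩ : ∃ m, b = c+1+m := ⟨b-(c+1), by omega⟩
  rw [show c+2-1 = c+1 from by omega, show c+2+1 = c+3 from by omega,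
    show c+1+m+1 = c+2+m from by omega]
  exact T3 f c m

/-- If the face angles `α` at the apical vertex `u` satisfy the two III-OAE
folding conditions (equations (7)), then the angles `A` at the other apical
vertex `w`, computed from the OAE/OAS vertex conditions, satisfy the same
two conditions. -/
theorem stmt_3 (M : ℕ) (hM : 2 ≤ M) (N : ℕ) (hN : N = 2 * M)
    (L : ℕ) (hL3 : 3 ≤ L) (hLN : L ≤ N - 2)
    (α β A : ℕ → ℝ)
    (hA1 : A 1 = π - α N - β N - β 2)
    (hAk : ∀ k : ℕ, (2 ≤ k ∧ k ≤ L - 2) ∨ (L + 1 ≤ k ∧ k ≤ N - 1) →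
      A k = α (k - 1) + β (k - 1) - β (k + 1))
    (hAL1 : A (L - 1) = -π + α (L - 2) + β (L - 2) + β L)
    (hAL : A L = π - α (L - 1) - β (L - 1) - β (L + 1))
    (hAN : A N = -π + α (N - 1) + β (N - 1) + β 1)
    (hα1 : ∑ k ∈ Icc 1 (L - 1), α k - ∑ k ∈ Icc L N, α k = 0)
    (hα2 : ∑ k ∈ Icc 1 (L - 1), (-1 : ℝ) ^ (k + 1) * α k -
      ∑ k ∈ Icc L N, (-1 : ℝ) ^ (k + 1) * α k = 0) :
    ∑ k ∈ Icc 1 (L - 1), A k - ∑ k ∈ Icc L N, A k = 0 ∧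
    ∑ k ∈ Icc 1 (L - 1), (-1 : ℝ) ^ (k + 1) * A k -
      ∑ k ∈ Icc L N, (-1 : ℝ) ^ (k + 1) * A k = 0 := by
  obtain ⟨l, rfl⟩ : ∃ l, L = l + 3 := ⟨L - 3, by omega⟩
  obtain ⟨n, rfl⟩ : ∃ n, N = l + 5 + n := ⟨N - (l + 5), by omega⟩
  rw [show l+3-1 = l+2 from by omega, show l+3-2 = l+1 from by omega] at hAL1
  rw [show l+3-1 = l+2 from by omega, show l+3+1 = l+4 from by omega] at hAL
  rw [show l+5+n-1 = l+4+n from by omega] at hAN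
  rw [show l+3-1 = l+2 from by omega] at hα1 hα2 ⊢
  have hAmid1 : ∀ k, 2 ≤ k → k ≤ l+1 → A k = α (k-1) + β (k-1) - β (k+1) :=
    fun k h1 h2 => hAk k (Or.inl ⟨h1, by omega⟩)
  have hAmid2 : ∀ k, l+4 ≤ k → k ≤ l+4+n → A k = α (k-1) + β (k-1) - β (k+1) :=
    fun k h1 h2 => hAk k (Or.inr ⟨by omega, by omega⟩)
  -- closed form of the left unsigned sum
  have E1 : ∑ k ∈ Icc 1 (l+2), A k
      = ∑ k ∈ Icc 1 (l+1), α k - α (l+5+n)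
        + (β 1 - β (l+2) + β (l+3) - β (l+5+n)) := by
    have s : ∑ k ∈ Icc 1 (l+2), A k
        = A 1 + ∑ k ∈ Icc 2 (l+2-1), A k + A (l+2) := split3 A 1 (l+2) (by omega)
    rw [show l+2-1 = l+1 from by omega] at s
    have mid : ∑ k ∈ Icc 2 (l+1), A k
        = ∑ k ∈ Icc 2 (l+1), (α (k-1) + (β (k-1) - β (k+1))) :=
      Finset.sum_congr rfl (fun k hk => by
        rw [Finset.mem_Icc] at hk
        rw [hAmid1 k hk.1 hk.2]; ring)
    have tα : ∑ k ∈ Icc 1 (l+1), α k = ∑ k ∈ Icc 1 l, α k + α (l+1) := by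
      have h := top_split' α 1 (l+1) (by omega) (by omega)
      rwa [show l+1-1 = l from by omega] at h
    rw [s, mid, Finset.sum_add_distrib, L0 α 2 (l+1) (by omega) (by omega),
      L1 β 2 (l+1) (by omega) (by omega)]
    rw [show (2:ℕ)-1 = 1 from by omega, show l+1-1 = l from by omega,
      show l+1+1 = l+2 from by omega]
    rw [hA1, hAL1, tα]
    ring
  -- closed form of the right unsigned sum
  have E2 : ∑ k ∈ Icc (l+3) (l+5+n), A k
      = ∑ k ∈ Icc (l+3) (l+3+n), α k - α (l+2) + α (l+4+n)
        + (β 1 - β (l+2) + β (l+3) - β (l+5+n)) := by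
    have s : ∑ k ∈ Icc (l+3) (l+5+n), A k
        = A (l+3) + ∑ k ∈ Icc (l+3+1) (l+5+n-1), A k + A (l+5+n) :=
      split3 A (l+3) (l+5+n) (by omega)
    rw [show l+5+n-1 = l+4+n from by omega, show l+3+1 = l+4 from by omega] at s
    have mid : ∑ k ∈ Icc (l+4) (l+4+n), A k
        = ∑ k ∈ Icc (l+4) (l+4+n), (α (k-1) + (β (k-1) - β (k+1))) :=
      Finset.sum_congr rfl (fun k hk => by
        rw [Finset.mem_Icc] at hk
        rw [hAmid2 k hk.1 hk.2]; ring)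
    rw [s, mid, Finset.sum_add_distrib, L0 α (l+4) (l+4+n) (by omega) (by omega),
      L1 β (l+4) (l+4+n) (by omega) (by omega)]
    rw [show l+4-1 = l+3 from by omega, show l+4+n-1 = l+3+n from by omega,
      show l+4+n+1 = l+5+n from by omega]
    rw [hAL, hAN]
    ring
  -- rewrite the unsigned hypothesis
  have t1 : ∑ k ∈ Icc 1 (l+2), α k = ∑ k ∈ Icc 1 (l+1), α k + α (l+2) := by
    have h := top_split' α 1 (l+2) (by omega) (by omega)
    rwa [show l+2-1 = l+1 from by omega] at h
  have t2 : ∑ k ∈ Icc (l+3) (l+5+n), α k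
      = ∑ k ∈ Icc (l+3) (l+3+n), α k + α (l+4+n) + α (l+5+n) := by
    have h1 := top_split' α (l+3) (l+5+n) (by omega) (by omega)
    rw [show l+5+n-1 = l+4+n from by omega] at h1
    have h2 := top_split' α (l+3) (l+4+n) (by omega) (by omega)
    rw [show l+4+n-1 = l+3+n from by omega] at h2
    rw [h1, h2]
  rw [t1, t2] at hα1
  -- parity facts
  have hw1 : (-1:ℝ)^(l+4+n) = -1 := Odd.neg_one_pow ⟨M-1, by omega⟩
  have hw3 : (-1:ℝ)^(l+5+n+1) = -1 := Odd.neg_one_pow ⟨M, by omega⟩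
  have hw4 : (-1:ℝ)^(l+4+n+1) = 1 := Even.neg_one_pow ⟨M, by omega⟩
  -- closed form of the left signed sum
  have F1 : ∑ k ∈ Icc 1 (l+2), (-1:ℝ)^(k+1) * A k
      = -(∑ k ∈ Icc 1 l, (-1:ℝ)^(k+1) * α k) - (-1:ℝ)^l * α (l+1) - α (l+5+n)
        + (π + (-1:ℝ)^l * π)
        + (-β 1 - (-1:ℝ)^l * β (l+2) - (-1:ℝ)^l * β (l+3) - β (l+5+n)) := by
    have s : ∑ k ∈ Icc 1 (l+2), (-1:ℝ)^(k+1) * A k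
        = (-1:ℝ)^(1+1) * A 1 + ∑ k ∈ Icc 2 (l+2-1), (-1:ℝ)^(k+1) * A k
          + (-1:ℝ)^(l+2+1) * A (l+2) :=
      split3 (fun k => (-1:ℝ)^(k+1) * A k) 1 (l+2) (by omega)
    rw [show l+2-1 = l+1 from by omega] at s
    have mid : ∑ k ∈ Icc 2 (l+1), (-1:ℝ)^(k+1) * A k
        = ∑ k ∈ Icc 2 (l+1), ((-1:ℝ)^(k+1) * α (k-1)
            + (-1:ℝ)^(k+1) * (β (k-1) - β (k+1))) :=
      Finset.sum_congr rfl (fun k hk => by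
        rw [Finset.mem_Icc] at hk
        rw [hAmid1 k hk.1 hk.2]; ring)
    rw [s, mid, Finset.sum_add_distrib, L2 α 2 (l+1) (by omega) (by omega),
      L3 β 2 (l+1) (by omega) (by omega)]
    rw [show (2:ℕ)-1 = 1 from by omega, show l+1-1 = l from by omega,
      show l+1+1 = l+2 from by omega]
    rw [hA1, hAL1]
    ring
  -- closed form of the right signed sum
  have F2 : ∑ k ∈ Icc (l+3) (l+5+n), (-1:ℝ)^(k+1) * A k
      = -(∑ k ∈ Icc (l+3) (l+3+n), (-1:ℝ)^(k+1) * α k)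
        - (-1:ℝ)^l * α (l+2) - α (l+4+n)
        + (π + (-1:ℝ)^l * π)
        + (-β 1 - (-1:ℝ)^l * β (l+2) - (-1:ℝ)^l * β (l+3) - β (l+5+n)) := by
    have s : ∑ k ∈ Icc (l+3) (l+5+n), (-1:ℝ)^(k+1) * A k
        = (-1:ℝ)^(l+3+1) * A (l+3)
          + ∑ k ∈ Icc (l+3+1) (l+5+n-1), (-1:ℝ)^(k+1) * A k
          + (-1:ℝ)^(l+5+n+1) * A (l+5+n) :=
      split3 (fun k => (-1:ℝ)^(k+1) * A k) (l+3) (l+5+n) (by omega)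
    rw [show l+5+n-1 = l+4+n from by omega, show l+3+1 = l+4 from by omega] at s
    have mid : ∑ k ∈ Icc (l+4) (l+4+n), (-1:ℝ)^(k+1) * A k
        = ∑ k ∈ Icc (l+4) (l+4+n), ((-1:ℝ)^(k+1) * α (k-1)
            + (-1:ℝ)^(k+1) * (β (k-1) - β (k+1))) :=
      Finset.sum_congr rfl (fun k hk => by
        rw [Finset.mem_Icc] at hk
        rw [hAmid2 k hk.1 hk.2]; ring)
    rw [s, mid, Finset.sum_add_distrib, L2 α (l+4) (l+4+n) (by omega) (by omega),
      L3 β (l+4) (l+4+n) (by omega) (by omega)]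
    rw [show l+4-1 = l+3 from by omega, show l+4+n-1 = l+3+n from by omega]
    rw [hw1, hw3, hw4]
    rw [show l+4+n+1 = l+5+n from by omega]
    rw [hAL, hAN]
    ring
  -- rewrite the signed hypothesis
  have u1 : ∑ k ∈ Icc 1 (l+2), (-1:ℝ)^(k+1) * α k
      = ∑ k ∈ Icc 1 l, (-1:ℝ)^(k+1) * α k
        + (-1:ℝ)^(l+1+1) * α (l+1) + (-1:ℝ)^(l+2+1) * α (l+2) := by
    have h1 : ∑ k ∈ Icc 1 (l+2), (-1:ℝ)^(k+1) * α k
        = ∑ k ∈ Icc 1 (l+2-1), (-1:ℝ)^(k+1) * α k + (-1:ℝ)^(l+2+1) * α (l+2) :=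
      top_split' (fun k => (-1:ℝ)^(k+1) * α k) 1 (l+2) (by omega) (by omega)
    rw [show l+2-1 = l+1 from by omega] at h1
    have h2 : ∑ k ∈ Icc 1 (l+1), (-1:ℝ)^(k+1) * α k
        = ∑ k ∈ Icc 1 (l+1-1), (-1:ℝ)^(k+1) * α k + (-1:ℝ)^(l+1+1) * α (l+1) :=
      top_split' (fun k => (-1:ℝ)^(k+1) * α k) 1 (l+1) (by omega) (by omega)
    rw [show l+1-1 = l from by omega] at h2
    rw [h1, h2]
  have u2 : ∑ k ∈ Icc (l+3) (l+5+n), (-1:ℝ)^(k+1) * α k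
      = ∑ k ∈ Icc (l+3) (l+3+n), (-1:ℝ)^(k+1) * α k
        + α (l+4+n) - α (l+5+n) := by
    have h1 : ∑ k ∈ Icc (l+3) (l+5+n), (-1:ℝ)^(k+1) * α k
        = ∑ k ∈ Icc (l+3) (l+5+n-1), (-1:ℝ)^(k+1) * α k
          + (-1:ℝ)^(l+5+n+1) * α (l+5+n) :=
      top_split' (fun k => (-1:ℝ)^(k+1) * α k) (l+3) (l+5+n) (by omega) (by omega)
    rw [show l+5+n-1 = l+4+n from by omega] at h1
    have h2 : ∑ k ∈ Icc (l+3) (l+4+n), (-1:ℝ)^(k+1) * α k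
        = ∑ k ∈ Icc (l+3) (l+4+n-1), (-1:ℝ)^(k+1) * α k
          + (-1:ℝ)^(l+4+n+1) * α (l+4+n) :=
      top_split' (fun k => (-1:ℝ)^(k+1) * α k) (l+3) (l+4+n) (by omega) (by omega)
    rw [show l+4+n-1 = l+3+n from by omega] at h2
    rw [h1, h2, hw3, hw4]
    ring
  rw [u1, u2] at hα2
  constructor
  · rw [E1, E2]
    linear_combination hα1
  · rw [F1, F2]
    linear_combination -hα2
end

section
/- Let α_1, α_2, α_3, α_4, δ_1, δ_2, δ_3 ∈ ℝ, let A(α) and Φ(δ) be the 3×3 rotation matrices A(α) = [[cos α, −sin α, 0],[sin α, cos α, 0],[0,0,1]] and Φ(δ) = [[1,0,0],[0, cos δ, −sin δ],[0, sin δ, cos δ]], and let e_1 = (1,0,0). If A(α_1)·Φ(π−δ_2)·A(α_2)·Φ(π−δ_3)·A(α_3) applied to e_1 equals Φ(δ_1−π)·A(−α_4) applied to e_1, then sin α_1 cos α_2 sin α_3 cos δ_2 cos δ_3 − sin α_1 sin α_3 sin δ_2 sin δ_3 − sin α_1 sin α_2 cos α_3 cos δ_2 − cos α_1 sin α_2 sin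 α_3 cos δ_3 + cos α_4 − cos α_1 cos α_2 cos α_3 = 0. -/
open Real Matrix

/-- Rotation about the z-axis by angle `α`. -/
noncomputable def Arot (α : ℝ) : Matrix (Fin 3) (Fin 3) ℝ :=
  !![Real.cos α, -Real.sin α, 0;
     Real.sin α, Real.cos α, 0;
     0, 0, 1]

/-- Rotation about the x-axis by angle `δ`. -/
noncomputable def Phi (δ : ℝ) : Matrix (Fin 3) (Fin 3) ℝ :=
  !![1, 0, 0;
     0, Real.cos δ, -Real.sin δ;
     0, Real.sin δ, Real.cos δ]

/-- Equating the x-components of the two rotation-sequence expressions for the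
vertex `v₄` of a four-faced cap yields the deformation equation (C-5). -/
theorem stmt_14 (α₁ α₂ α₃ α₄ δ₁ δ₂ δ₃ : ℝ)
    (h : (Arot α₁ * Phi (π - δ₂) * Arot α₂ * Phi (π - δ₃) * Arot α₃).mulVec
        ![1, 0, 0] =
      (Phi (δ₁ - π) * Arot (-α₄)).mulVec ![1, 0, 0]) :
    Real.sin α₁ * Real.cos α₂ * Real.sin α₃ * Real.cos δ₂ * Real.cos δ₃ -
      Real.sin α₁ * Real.sin α₃ * Real.sin δ₂ * Real.sin δ₃ -
      Real.sin α₁ * Real.sin α₂ * Real.cos α₃ * Real.cos δ₂ -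
      Real.cos α₁ * Real.sin α₂ * Real.sin α₃ * Real.cos δ₃ +
      Real.cos α₄ - Real.cos α₁ * Real.cos α₂ * Real.cos α₃ = 0 := by
  have h0 := congrFun h 0
  simp [Arot, Phi, Matrix.mulVec, Matrix.mul_apply, dotProduct,
    Fin.sum_univ_succ, Real.cos_pi_sub, Real.sin_pi_sub, Real.cos_sub, Real.sin_sub,
    Real.cos_neg, Real.sin_neg] at h0
  nlinarith [h0, Real.sin_sq_add_cos_sq δ₁]
end

section
/- Let δ, α, β, γ, ψ, φ ∈ ℝ with cos(ψ/2) ≠ 0 and cos(φ/2) ≠ 0, and set t = tan(φ/2), u = tan(ψ/2). Then sin δ cos α sin β cos ψ cos φ − sin δ sin β sin ψ sin φ − sin δ sin α cos β cos ψ − cos δ sin α sin β cos φ + cos γ − cos δ cos α cos β = 0 if and only if A t²u² + B t² + 2 C t u + D u² + E = 0, where A = cos γ − cos(α+β+δ), B = cos γ − cos(α+β−δ), C = −2 sin β sin δ, D = cos γ − cos(α−β+δ), E = cos γ − cos(α−β−δ). -/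
open Real

/-- Under the half-angle substitutions `t = tan (φ/2)`, `u = tan (ψ/2)`,
equation (C-5) transforms into Bricard's quadratic tetrahedral equation
`A t²u² + B t² + 2 C t u + D u² + E = 0`. -/
theorem stmt_15 (δ α β γ ψ φ : ℝ)
    (hψ : Real.cos (ψ / 2) ≠ 0) (hφ : Real.cos (φ / 2) ≠ 0)
    (t u : ℝ) (ht : t = Real.tan (φ / 2)) (hu : u = Real.tan (ψ / 2)) :
    (Real.sin δ * Real.cos α * Real.sin β * Real.cos ψ * Real.cos φ -
      Real.sin δ * Real.sin β * Real.sin ψ * Real.sin φ -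
      Real.sin δ * Real.sin α * Real.cos β * Real.cos ψ -
      Real.cos δ * Real.sin α * Real.sin β * Real.cos φ +
      Real.cos γ - Real.cos δ * Real.cos α * Real.cos β = 0) ↔
    ((Real.cos γ - Real.cos (α + β + δ)) * t ^ 2 * u ^ 2 +
      (Real.cos γ - Real.cos (α + β - δ)) * t ^ 2 +
      2 * (-(2 * Real.sin β * Real.sin δ)) * t * u +
      (Real.cos γ - Real.cos (α - β + δ)) * u ^ 2 +
      (Real.cos γ - Real.cos (α - β - δ)) = 0) := by
  have hsc : Real.sin (φ/2)^2 + Real.cos (φ/2)^2 = 1 := Real.sin_sq_add_cos_sq _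
  have hde : Real.sin (ψ/2)^2 + Real.cos (ψ/2)^2 = 1 := Real.sin_sq_add_cos_sq _
  have hts : t * Real.cos (φ/2) = Real.sin (φ/2) := by
    rw [ht, Real.tan_eq_sin_div_cos]; field_simp
  have hud : u * Real.cos (ψ/2) = Real.sin (ψ/2) := by
    rw [hu, Real.tan_eq_sin_div_cos]; field_simp
  have hcosφ : Real.cos φ = Real.cos (φ/2)^2 - Real.sin (φ/2)^2 := by
    rw [show φ = 2*(φ/2) by ring, Real.cos_two_mul']; norm_num
  have hsinφ : Real.sin φ = 2 * (Real.sin (φ/2) * Real.cos (φ/2)) := by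
    rw [show φ = 2*(φ/2) by ring, Real.sin_two_mul]; norm_num; ring
  have hcosψ : Real.cos ψ = Real.cos (ψ/2)^2 - Real.sin (ψ/2)^2 := by
    rw [show ψ = 2*(ψ/2) by ring, Real.cos_two_mul']; norm_num
  have hsinψ : Real.sin ψ = 2 * (Real.sin (ψ/2) * Real.cos (ψ/2)) := by
    rw [show ψ = 2*(ψ/2) by ring, Real.sin_two_mul]; norm_num; ring
  set c := Real.cos (φ/2) with hc
  set s := Real.sin (φ/2) with hs
  set d := Real.cos (ψ/2) with hd
  set e := Real.sin (ψ/2) with he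
  have key : ((Real.cos γ - Real.cos (α + β + δ)) * t ^ 2 * u ^ 2 +
      (Real.cos γ - Real.cos (α + β - δ)) * t ^ 2 +
      2 * (-(2 * Real.sin β * Real.sin δ)) * t * u +
      (Real.cos γ - Real.cos (α - β + δ)) * u ^ 2 +
      (Real.cos γ - Real.cos (α - β - δ))) * (c^2 * d^2) =
      (Real.sin δ * Real.cos α * Real.sin β * Real.cos ψ * Real.cos φ -
      Real.sin δ * Real.sin β * Real.sin ψ * Real.sin φ -
      Real.sin δ * Real.sin α * Real.cos β * Real.cos ψ -
      Real.cos δ * Real.sin α * Real.sin β * Real.cos φ +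
      Real.cos γ - Real.cos δ * Real.cos α * Real.cos β) := by
    rw [hcosφ, hsinφ, hcosψ, hsinψ]
    simp only [Real.cos_add, Real.cos_sub, Real.sin_add, Real.sin_sub]
    linear_combination (s*d^2*(Real.cos γ) + s*d^2*(Real.sin α)*(Real.sin β)*(Real.cos δ) + (-1)*s*d^2*(Real.sin α)*(Real.cos β)*(Real.sin δ) + (-1)*s*d^2*(Real.cos α)*(Real.sin β)*(Real.sin δ) + (-1)*s*d^2*(Real.cos α)*(Real.cos β)*(Real.cos δ) + u*s*d*e*(Real.cos γ) + u*s*d*e*(Real.sin α)*(Real.sin β)*(Real.cos δ) + u*s*d*e*(Real.sin α)*(Real.cos β)*(Real.sin δ) + u*s*d*e*(Real.cos α)*(Real.sin β)*(Real.sin δ) + (-1)*u*s*d*e*(Real.cos α)*(Real.cos β)*(Real.cos δ) + (-4)*u*c*d^2*(Real.sin β)*(Real.sin δ) + t*c*d^2*(Real.cos γ) + t*c*d^2*(Real.sin α)*(Real.sin β)*(Real.cos δ) + (-1)*t*c*d^2*(Real.sin α)*(Real.cos β)*(Real.sin δ) + (-1)*t*c*d^2*(Real.cos α)*(Real.sin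 β)*(Real.sin δ) + (-1)*t*c*d^2*(Real.cos α)*(Real.cos β)*(Real.cos δ) + t*u^2*c*d^2*(Real.cos γ) + t*u^2*c*d^2*(Real.sin α)*(Real.sin β)*(Real.cos δ) + t*u^2*c*d^2*(Real.sin α)*(Real.cos β)*(Real.sin δ) + t*u^2*c*d^2*(Real.cos α)*(Real.sin β)*(Real.sin δ) + (-1)*t*u^2*c*d^2*(Real.cos α)*(Real.cos β)*(Real.cos δ)) * hts + (s^2*e*(Real.cos γ) + s^2*e*(Real.sin α)*(Real.sin β)*(Real.cos δ) + s^2*e*(Real.sin α)*(Real.cos β)*(Real.sin δ) + s^2*e*(Real.cos α)*(Real.sin β)*(Real.sin δ) + (-1)*s^2*e*(Real.cos α)*(Real.cos β)*(Real.cos δ) + (-4)*c*s*d*(Real.sin β)*(Real.sin δ) + c^2*e*(Real.cos γ) + (-1)*c^2*e*(Real.sin α)*(Real.sin β)*(Real.cos δ) + c^2*e*(Real.sin α)*(Real.cos β)*(Real.sin δ) + (-1)*c^2*e*(Real.cos α)*(Real.sin β)*(Real.sin δ) + (-1)*c^2*e*(Real.cos α)*(Real.cos β)*(Real.cos δ)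 + u*c^2*d*(Real.cos γ) + (-1)*u*c^2*d*(Real.sin α)*(Real.sin β)*(Real.cos δ) + u*c^2*d*(Real.sin α)*(Real.cos β)*(Real.sin δ) + (-1)*u*c^2*d*(Real.cos α)*(Real.sin β)*(Real.sin δ) + (-1)*u*c^2*d*(Real.cos α)*(Real.cos β)*(Real.cos δ) + t*u*c*s*d*(Real.cos γ) + t*u*c*s*d*(Real.sin α)*(Real.sin β)*(Real.cos δ) + t*u*c*s*d*(Real.sin α)*(Real.cos β)*(Real.sin δ) + t*u*c*s*d*(Real.cos α)*(Real.sin β)*(Real.sin δ) + (-1)*t*u*c*s*d*(Real.cos α)*(Real.cos β)*(Real.cos δ)) * hud + ((-1)*(Real.sin α)*(Real.sin β)*(Real.cos δ) + e^2*(Real.cos γ) + e^2*(Real.sin α)*(Real.sin β)*(Real.cos δ) + e^2*(Real.sin α)*(Real.cos β)*(Real.sin δ) + (-1)*e^2*(Real.cos α)*(Real.cos β)*(Real.cos δ) + d^2*(Real.cos γ) + d^2*(Real.sin α)*(Real.sin β)*(Real.cos δ) + (-1)*d^2*(Real.sin α)*(Real.cos β)*(Real.sin δ) + (-1)*d^2*(Real.cos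 α)*(Real.cos β)*(Real.cos δ)) * hsc + ((Real.cos γ) + (Real.sin α)*(Real.sin β)*(Real.cos δ) + (-1)*(Real.cos α)*(Real.cos β)*(Real.cos δ) + (-2)*c^2*(Real.sin α)*(Real.sin β)*(Real.cos δ)) * hde
  constructor
  · intro h
    have h2 := key.trans h
    rcases mul_eq_zero.mp h2 with h3 | h3
    · exact h3
    · exact absurd h3 (by positivity)
  · intro h
    rw [← key, h, zero_mul]
end

section
/- Let α_1, α_2, α_3, α_4, δ_1, δ_2, δ_4 ∈ ℝ, let A(α) and Φ(δ) be the 3×3 rotation matrices A(α) = [[cos α, −sin α, 0],[sin α, cos α, 0],[0,0,1]] and Φ(δ) = [[1,0,0],[0, cos δ, −sin δ],[0, sin δ, cos δ]], and let e_1 = (1,0,0). If A(α_1)·Φ(π−δ_2)·A(α_2) applied to e_1 equals Φ(δ_1−π)·A(−α_4)·Φ(δ_4−π)·A(−α_3) applied to e_1, then cos α_1 cos α_2 + sin α_1 sin α_2 cos δ_2 = cos α_3 cos α_4 + sin α_3 sin α_4 cos δ_4. -/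
open Real Matrix

/-- Equating the x-components of the two rotation-sequence expressions for the
vertex `v₃` of a four-faced cap yields the linear relation (C-6) between the
opposite dihedral angles `δ₂` and `δ₄`. -/
theorem stmt_16 (α₁ α₂ α₃ α₄ δ₁ δ₂ δ₄ : ℝ)
    (h : (Arot α₁ * Phi (π - δ₂) * Arot α₂).mulVec ![1, 0, 0] =
      (Phi (δ₁ - π) * Arot (-α₄) * Phi (δ₄ - π) * Arot (-α₃)).mulVec
        ![1, 0, 0]) :
    Real.cos α₁ * Real.cos α₂ + Real.sin α₁ * Real.sin α₂ * Real.cos δ₂ =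
      Real.cos α₃ * Real.cos α₄ + Real.sin α₃ * Real.sin α₄ * Real.cos δ₄ := by
  have h0 := congrFun h 0
  simp [Arot, Phi, mulVec, dotProduct, mul_apply, Fin.sum_univ_succ,
    Real.cos_pi_sub, Real.sin_pi_sub, Real.cos_sub, Real.sin_sub] at h0
  ring_nf at h0 ⊢
  linarith
end
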